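/- Conversely to the previous statement: if for every G-stable ideal I of the K-algebra R there exist finitely many f_1, ..., f_l ∈ I such that y ∈ A(K) lies in the zero set of I iff f_i(g·y) = 0 for all i and all g ∈ G, then A(K) with the Zariski topology is a G-Noetherian topological space. -/

import Mathlib

/-- A topological space with an action `act : G → X → X` is `G`-Noetherian if every
descending chain of closed `G`-stable subsets stabilises. -/
def IsTopGNoetherian {G X : Type*} [TopologicalSpace X] (act : G → X → X) : Prop :=
  ∀ C : ℕ → Set X,
    (∀ n, IsClosed (C n)) →
    (∀ n, C (n + 1) ⊆ C n) →
    (∀ n g x, x ∈ C n → act g x ∈ C n) →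
    ∃ m, ∀ n, m ≤ n → C n = C m

/-- The Zariski topology on the set `A(K) = Hom_{K-alg}(R, K)` of `K`-rational
points of `Spec R`: closed sets are common zero sets of subsets of `R`. -/
def zariskiTopology (K R : Type*) [CommRing K] [CommRing R] [Algebra K R] :
    TopologicalSpace (R →ₐ[K] K) :=
  TopologicalSpace.generateFrom {U | ∃ f : R, U = {y : R →ₐ[K] K | y f ≠ 0}}

/-- The vanishing ideal of a set of points. -/
def vanishingIdeal {K R : Type*} [Field K] [CommRing R] [Algebra K R]
    (C : Set (R →ₐ[K] K)) : Ideal R where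
  carrier := {f | ∀ y ∈ C, y f = 0}
  add_mem' := fun ha hb y hy => by simp [map_add, ha y hy, hb y hy]
  zero_mem' := fun y _ => map_zero y
  smul_mem' := fun c f hf y hy => by simp [smul_eq_mul, map_mul, hf y hy]

lemma prod_trick {K R : Type*} [Field K] [CommRing R] [Algebra K R]
    {t : Set (Set (R →ₐ[K] K))} (htf : t.Finite)
    (hts : t ⊆ {U | ∃ f : R, U = {y : R →ₐ[K] K | y f ≠ 0}})
    {y : R →ₐ[K] K} (hyt : y ∈ ⋂₀ t) :
    ∃ f : R, y f ≠ 0 ∧ ∀ z : R →ₐ[K] K, z f ≠ 0 → z ∈ ⋂₀ t := by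
  refine Set.Finite.induction_on (motive := fun t _ => t ⊆ {U | ∃ f : R, U = {y : R →ₐ[K] K | y f ≠ 0}} →
      y ∈ ⋂₀ t → ∃ f : R, y f ≠ 0 ∧ ∀ z : R →ₐ[K] K, z f ≠ 0 → z ∈ ⋂₀ t) t htf
      (fun _ _ => ⟨1, by simp, fun z _ => by simp⟩) ?_ hts hyt
  intro u s hus hsf ih hts hyt
  have hyu : y ∈ u := hyt u (Set.mem_insert u s)
  have hys : y ∈ ⋂₀ s := fun v hv => hyt v (Set.mem_insert_of_mem u hv)
  obtain ⟨f, hyf, hf⟩ := ih (fun v hv => hts (Set.mem_insert_of_mem u hv)) hys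
  obtain ⟨g, rfl⟩ := hts (Set.mem_insert u s)
  refine ⟨g * f, ?_, ?_⟩
  · simp only [map_mul]
    exact mul_ne_zero hyu hyf
  · intro z hz
    simp only [map_mul] at hz
    intro v hv
    rcases hv with rfl | hv
    · exact fun h0 => hz (by simp [h0])
    · exact hf z (fun h0 => hz (by simp [h0])) v hv

lemma mem_of_vanishing {K R : Type*} [Field K] [CommRing R] [Algebra K R]
    {C : Set (R →ₐ[K] K)} (hC : @IsClosed _ (zariskiTopology K R) C)
    {y : R →ₐ[K] K} (hy : ∀ f ∈ vanishingIdeal C, y f = 0) : y ∈ C := by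
  letI := zariskiTopology K R
  by_contra hyC
  have hB := TopologicalSpace.isTopologicalBasis_of_subbasis
    (rfl : zariskiTopology K R = TopologicalSpace.generateFrom _)
  obtain ⟨v, hv, hyv, hvC⟩ := hB.exists_subset_of_mem_open (Set.mem_compl hyC) hC.isOpen_compl
  obtain ⟨t, ⟨htf, hts⟩, rfl⟩ := hv
  obtain ⟨f, hyf, hf⟩ := prod_trick htf hts hyv
  refine hyf (hy f ?_)
  intro z hz
  by_contra h0
  exact hvC (hf z h0) hz

/-- converse of Statement 11: if every `G`-stable ideal `I` of `R`
admits finitely many elements `f₁, …, f_l ∈ I` such that `y` lies in the zero set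
of `I` iff `fᵢ(g • y) = 0` for all `i` and `g`, then `A(K)` with the Zariski
topology is a `G`-Noetherian topological space. -/
theorem topGNoetherian_of_finitely_many_equations
    {G : Type*} [Group G] (K R : Type*) [Field K] [CommRing R] [Algebra K R]
    (ρ : G →* (R ≃ₐ[K] R))
    (h : ∀ I : Ideal R, (∀ (g : G), ∀ x ∈ I, ρ g x ∈ I) →
      ∃ (l : ℕ) (f : Fin l → R), (∀ i, f i ∈ I) ∧
        ∀ y : R →ₐ[K] K,
          ((∀ x ∈ I, y x = 0) ↔ ∀ (i : Fin l) (g : G), (y.comp (ρ g⁻¹).toAlgHom) (f i) = 0)) :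
    @IsTopGNoetherian G (R →ₐ[K] K) (zariskiTopology K R)
      (fun (g : G) (y : R →ₐ[K] K) => y.comp (ρ g⁻¹).toAlgHom) := by
  intro C hCcl hCdesc hCstab
  have hCanti : Antitone C := antitone_nat_of_succ_le hCdesc
  set I : ℕ → Ideal R := fun n => vanishingIdeal (C n) with hI
  have hImono : Monotone I := fun a b hab f hf y hy => hf y (hCanti hab hy)
  have hIstab : ∀ n (g : G), ∀ x ∈ I n, ρ g x ∈ I n := by
    intro n g x hx y hy
    have : (y.comp (ρ g⁻¹⁻¹).toAlgHom) x = 0 :=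
      hx _ (hCstab n g⁻¹ y hy)
    simpa using this
  set J : Ideal R := ⨆ n, I n with hJ
  have hmemJ : ∀ x, x ∈ J ↔ ∃ n, x ∈ I n := fun x =>
    Submodule.mem_iSup_of_directed _ hImono.directed_le
  have hJstab : ∀ (g : G), ∀ x ∈ J, ρ g x ∈ J := by
    intro g x hx
    obtain ⟨n, hn⟩ := (hmemJ x).mp hx
    exact (hmemJ _).mpr ⟨n, hIstab n g x hn⟩
  obtain ⟨l, f, hfJ, hfchar⟩ := h J hJstab
  -- each f i lies in some I (m i); take the max
  have : ∃ m, ∀ i, f i ∈ I m := by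
    choose mi hmi using fun i => (hmemJ (f i)).mp (hfJ i)
    refine ⟨(Finset.univ.sup mi), fun i => hImono ?_ (hmi i)⟩
    exact Finset.le_sup (Finset.mem_univ i)
  obtain ⟨m, hm⟩ := this
  refine ⟨m, fun n hn => ?_⟩
  apply Set.Subset.antisymm
  · -- C n ⊆ C m
    exact hCanti hn
  · -- C m ⊆ C n
    intro y hy
    refine mem_of_vanishing (hCcl n) ?_
    intro x hx
    have hxJ : x ∈ J := (hmemJ x).mpr ⟨n, hx⟩
    have hall : ∀ (i : Fin l) (g : G), (y.comp (ρ g⁻¹).toAlgHom) (f i) = 0 := by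
      intro i g
      exact hm i _ (hCstab m g y hy)
    exact (hfchar y).mpr hall x hxJ
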